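/- Let N ≥ 1 and let h : ℕ → ℤ/2ℤ be an essentially descendible 2N-periodic function. Then the function ĥ, defined on even positive integers by ĥ(m) = Σ_{k=1}^{v₂(m)} h(m/2^k), satisfies ĥ(m + 2N) = ĥ(m) for all even m ≥ 2N + 1. -/

import Mathlib

open Polynomial

/-- `h : ℕ → ℤ/2ℤ` is `2N`-periodic (on positive integers). -/
def IsPeriodicTwoN (N : ℕ) (h : ℕ → ZMod 2) : Prop :=
  ∀ x, 1 ≤ x → h (x + 2 * N) = h x

/-- The set `T` associated to a `2N`-periodic function `h`: even `x ∈ [1,2N]` such that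
`#{k : 1 ≤ k ≤ v₂(x), h(x/2^k) = 1}` is odd. -/
def Tset (N : ℕ) (h : ℕ → ZMod 2) : Set ℕ :=
  {x | 1 ≤ x ∧ x ≤ 2 * N ∧ Even x ∧
    Odd (((Finset.Icc 1 (padicValNat 2 x)).filter (fun k => h (x / 2 ^ k) = 1)).card)}

/-- `h` is a descendible `2N`-periodic function. -/
def IsDescendible (N : ℕ) (h : ℕ → ZMod 2) : Prop :=
  IsPeriodicTwoN N h ∧
  ∀ x, 1 ≤ x → x ≤ N →
    ((2 * x ∈ Tset N h ∧ N + x ∈ Tset N h) → ¬ h (N + x) = 1) ∧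
    ((2 * x ∈ Tset N h ∧ N + x ∉ Tset N h) → h (N + x) = 1) ∧
    ((2 * x ∉ Tset N h ∧ N + x ∈ Tset N h) → h (N + x) = 1) ∧
    ((2 * x ∉ Tset N h ∧ N + x ∉ Tset N h) → ¬ h (N + x) = 1)

/-- `ĥ(m) = Σ_{k=1}^{v₂(m)} h(m/2^k)`. -/
def hhat (h : ℕ → ZMod 2) (m : ℕ) : ZMod 2 :=
  ∑ k ∈ Finset.Icc 1 (padicValNat 2 m), h (m / 2 ^ k)

/-- `h` is an essentially descendible `2N`-periodic function. -/
def IsEssDescendible (N : ℕ) (h : ℕ → ZMod 2) : Prop :=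
  ∃ g : ℕ → ZMod 2, IsDescendible N g ∧
    (∀ i, 2 * N + 1 ≤ i → h i = g i) ∧
    ∀ m, 1 ≤ m →
      (∑ k ∈ (Finset.range (2 * N + 1)).filter (fun k => 2 ^ k * m ≤ 2 * N), h (2 ^ k * m))
        = ∑ k ∈ (Finset.range (2 * N + 1)).filter (fun k => 2 ^ k * m ≤ 2 * N), g (2 ^ k * m)

/- ### Auxiliary lemmas -/

lemma hhat_range (f : ℕ → ZMod 2) (m : ℕ) :
    hhat f m = ∑ i ∈ Finset.range (padicValNat 2 m), f (m / 2 ^ (1 + i)) := by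
  rw [hhat, ← Finset.Ico_add_one_right_eq_Icc, Finset.sum_Ico_eq_sum_range]
  simp

lemma hhat_two_mul (f : ℕ → ZMod 2) (t : ℕ) (ht : 1 ≤ t) :
    hhat f (2 * t) = f t + hhat f t := by
  rw [hhat_range, hhat_range]
  have hv : padicValNat 2 (2 * t) = padicValNat 2 t + 1 := by
    rw [padicValNat.mul (by norm_num) (by omega), padicValNat.self one_lt_two]; ring
  rw [hv, Finset.sum_range_succ']
  have h0 : 2 * t / 2 ^ (1 + 0) = t := by simp
  have hs : ∀ i, 2 * t / 2 ^ (1 + (i + 1)) = t / 2 ^ (1 + i) := by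
    intro i
    rw [show (2:ℕ) ^ (1 + (i+1)) = 2 * 2 ^ (1 + i) by ring, Nat.mul_div_mul_left _ _ two_pos]
  rw [h0]
  simp_rw [hs]
  exact add_comm _ _

lemma hhat_odd (f : ℕ → ZMod 2) (m : ℕ) (hm : ¬ Even m) : hhat f m = 0 := by
  have : padicValNat 2 m = 0 :=
    padicValNat.eq_zero_of_not_dvd (by rwa [← even_iff_two_dvd])
  rw [hhat, this]
  simp

lemma sum_eq_card (s : Finset ℕ) (f : ℕ → ZMod 2) :
    ∑ k ∈ s, f k = ((s.filter (fun k => f k = 1)).card : ZMod 2) := by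
  rw [← Finset.sum_boole]
  refine Finset.sum_congr rfl fun k _ => ?_
  have : ∀ a : ZMod 2, a = if a = 1 then 1 else 0 := by decide
  exact this (f k)

lemma mem_Tset_iff (N : ℕ) (g : ℕ → ZMod 2) (y : ℕ) (h1 : 1 ≤ y) (h2 : y ≤ 2 * N) :
    y ∈ Tset N g ↔ hhat g y = 1 := by
  by_cases hy : Even y
  · have hcard : hhat g y
        = (((Finset.Icc 1 (padicValNat 2 y)).filter (fun k => g (y / 2 ^ k) = 1)).card : ZMod 2) :=
      sum_eq_card _ _
    constructor
    · rintro ⟨-, -, -, hodd⟩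
      rw [hcard, ZMod.natCast_eq_one_iff_odd]; exact hodd
    · intro hone
      refine ⟨h1, h2, hy, ?_⟩
      rw [← ZMod.natCast_eq_one_iff_odd, ← hcard]; exact hone
  · constructor
    · rintro ⟨-, -, he, -⟩; exact absurd he hy
    · intro hone
      rw [hhat_odd g y hy] at hone
      exact absurd hone (by decide)

lemma key_relation (N : ℕ) (g : ℕ → ZMod 2) (hg : IsDescendible N g)
    (x : ℕ) (hx1 : 1 ≤ x) (hx2 : x ≤ N) :
    g (N + x) = hhat g (2 * x) + hhat g (N + x) := by
  obtain ⟨c1, c2, c3, c4⟩ := hg.2 x hx1 hx2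
  have hA : 2 * x ∈ Tset N g ↔ hhat g (2 * x) = 1 :=
    mem_Tset_iff N g (2 * x) (by omega) (by omega)
  have hB : N + x ∈ Tset N g ↔ hhat g (N + x) = 1 :=
    mem_Tset_iff N g (N + x) (by omega) (by omega)
  have two : ∀ a : ZMod 2, a ≠ 1 → a = 0 := by decide
  by_cases hA' : 2 * x ∈ Tset N g <;> by_cases hB' : N + x ∈ Tset N g
  · rw [hA.mp hA', hB.mp hB', two _ (c1 ⟨hA', hB'⟩)]; decide
  · rw [hA.mp hA', two _ (fun hh => hB' (hB.mpr hh)), c2 ⟨hA', hB'⟩]; decide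
  · rw [hB.mp hB', two _ (fun hh => hA' (hA.mpr hh)), c3 ⟨hA', hB'⟩]; decide
  · rw [two _ (fun hh => hA' (hA.mpr hh)), two _ (fun hh => hB' (hB.mpr hh)),
      two _ (c4 ⟨hA', hB'⟩)]; decide

lemma hhat_periodic_of_descendible (N : ℕ) (hN : 1 ≤ N) (g : ℕ → ZMod 2)
    (hg : IsDescendible N g) :
    ∀ x, 1 ≤ x → hhat g (2 * x + 2 * N) = hhat g (2 * x) := by
  intro x
  induction x using Nat.strong_induction_on with
  | _ x IH =>
  intro hx1
  have hrecN : hhat g (2 * x + 2 * N) = g (x + N) + hhat g (x + N) := by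
    rw [show 2 * x + 2 * N = 2 * (x + N) by ring, hhat_two_mul g (x + N) (by omega)]
  rcases le_or_gt x N with hle | hlt
  · -- base case: 1 ≤ x ≤ N
    have hkey := key_relation N g hg x hx1 hle
    rw [hrecN, show x + N = N + x by ring, hkey]
    have : ∀ a b : ZMod 2, a + b + b = a := by decide
    exact this _ _
  · -- inductive case: x = y + N with y ≥ 1
    set y := x - N with hy
    have hxy : x = y + N := by omega
    have hy1 : 1 ≤ y := by omega
    have hIHy : hhat g (2 * y + 2 * N) = hhat g (2 * y) := IH y (by omega) hy1
    have hgper : g (y + 2 * N) = g y := hg.1 y hy1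
    have hstep : hhat g (y + 2 * N) = hhat g y := by
      by_cases hye : Even y
      · obtain ⟨t, ht⟩ := hye
        have ht1 : 1 ≤ t := by omega
        have := IH t (by omega) ht1
        rw [show y + 2 * N = 2 * t + 2 * N by omega, this, show y = 2 * t by omega]
      · rw [hhat_odd g y hye, hhat_odd g (y + 2 * N) (by
          simp only [Nat.even_add] at *
          simp [hye])]
    rw [hrecN, show x + N = y + 2 * N by omega, hgper, hstep]
    have h1 : hhat g (2 * y + 2 * N) = g (y + N) + hhat g (y + N) := by
      rw [show 2 * y + 2 * N = 2 * (y + N) by ring, hhat_two_mul g (y + N) (by omega)]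
    have h2 : hhat g (2 * y) = g y + hhat g y := hhat_two_mul g y hy1
    rw [show 2 * x = 2 * (y + N) by omega, hhat_two_mul g (y + N) (by omega)]
    rw [h1, h2] at hIHy
    exact hIHy.symm


def Tf (N : ℕ) (f : ℕ → ZMod 2) (t : ℕ) : ZMod 2 :=
  ∑ k ∈ (Finset.range (2 * N + 1)).filter (fun k => 2 ^ k * t ≤ 2 * N), f (2 ^ k * t)

lemma Tf_step (N : ℕ) (f : ℕ → ZMod 2) (t : ℕ) (ht : 1 ≤ t) :
    Tf N f t = (if t ≤ 2 * N then f t else 0) + Tf N f (2 * t) := by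
  unfold Tf
  rw [Finset.sum_filter, Finset.sum_filter]
  have hext : ∑ k ∈ Finset.range (2 * N + 1), (if 2 ^ k * t ≤ 2 * N then f (2 ^ k * t) else 0)
      = ∑ k ∈ Finset.range (2 * N + 1 + 1), (if 2 ^ k * t ≤ 2 * N then f (2 ^ k * t) else 0) := by
    symm
    rw [Finset.sum_range_succ]
    have : ¬ (2 ^ (2 * N + 1) * t ≤ 2 * N) := by
      have h1 : 2 * N + 1 < 2 ^ (2 * N + 1) := Nat.lt_two_pow_self
      have h2 : 2 ^ (2 * N + 1) ≤ 2 ^ (2 * N + 1) * t := Nat.le_mul_of_pos_right _ (by omega)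
      omega
    rw [if_neg this, add_zero]
  rw [hext, Finset.sum_range_succ']
  have h0 : 2 ^ 0 * t = t := by ring
  have hs : ∀ i : ℕ, 2 ^ (i + 1) * t = 2 ^ i * (2 * t) := fun i => by ring
  simp_rw [hs, h0]
  exact add_comm _ _

lemma eq_of_ess (N : ℕ) (h g : ℕ → ZMod 2)
    (h2 : ∀ i, 2 * N + 1 ≤ i → h i = g i)
    (h3 : ∀ m, 1 ≤ m → Tf N h m = Tf N g m) :
    ∀ t, 1 ≤ t → h t = g t := by
  intro t ht
  rcases le_or_gt t (2 * N) with hle | hlt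
  · have e1 := Tf_step N h t ht
    have e2 := Tf_step N g t ht
    rw [if_pos hle] at e1 e2
    have e3 := h3 t ht
    have e4 := h3 (2 * t) (by omega)
    rw [e1, e2, e4] at e3
    exact add_right_cancel e3
  · exact h2 t (by omega)

lemma hhat_congr (h g : ℕ → ZMod 2) (heq : ∀ t, 1 ≤ t → h t = g t) (m : ℕ) (hm : 1 ≤ m) :
    hhat h m = hhat g m := by
  refine Finset.sum_congr rfl fun k hk => ?_
  simp only [Finset.mem_Icc] at hk
  have hdvd : 2 ^ k ∣ m := dvd_trans (pow_dvd_pow 2 hk.2) pow_padicValNat_dvd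
  have : 1 ≤ m / 2 ^ k := (Nat.one_le_div_iff (Nat.two_pow_pos k)).mpr
    (Nat.le_of_dvd (by omega) hdvd)
  exact heq _ this

theorem hhat_eventually_periodic_of_essDescendible (N : ℕ) (hN : 1 ≤ N)
    (h : ℕ → ZMod 2) (hh : IsEssDescendible N h) :
    ∀ m, 2 * N + 1 ≤ m → Even m → hhat h (m + 2 * N) = hhat h m := by
  obtain ⟨g, hgdesc, h2, h3⟩ := hh
  have h3' : ∀ m, 1 ≤ m → Tf N h m = Tf N g m := h3
  have heq : ∀ t, 1 ≤ t → h t = g t := eq_of_ess N h g h2 h3'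
  intro m hm hme
  obtain ⟨x, hx⟩ := hme
  have hx1 : 1 ≤ x := by omega
  rw [hhat_congr h g heq _ (by omega), hhat_congr h g heq _ (by omega),
    show m = 2 * x by omega]
  exact hhat_periodic_of_descendible N hN g hgdesc x hx1
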